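/- Let r be a prime power, m = 2, q = r². Suppose a₀, a₁ ∈ F_q, f₀, f₁ ∈ F_r[X] are q-linearized, and z in the algebraic closure of F_r satisfies a₀f₀(z) + a₁f₁(z)^r = 0. Then N_{q/r}(a₀)·(f₀∘f₀)(z) − N_{q/r}(a₁)·(f₁∘f₁)(z^q) = 0. -/

import Mathlib

open Polynomial Finset

/-- The case `m = 2`, `q = r²`: if `a₀ f₀(z) + a₁ f₁(z)^r = 0`, where `a₀, a₁ ∈ F_q` and
`f₀, f₁` are `q`-linearized over `F_r`, then
`N_{q/r}(a₀)·(f₀∘f₀)(z) − N_{q/r}(a₁)·(f₁∘f₁)(z^q) = 0`. -/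
theorem stmt6 (r : ℕ) (hr : IsPrimePow r)
    (Ω : Type*) [Field Ω] [IsAlgClosed Ω]
    (K L : Subfield Ω) [Fintype K] [Fintype L]
    (hK : Fintype.card K = r) (hL : Fintype.card L = r ^ 2)
    (a₀ a₁ : Ω) (ha₀ : a₀ ∈ L) (ha₁ : a₁ ∈ L)
    (f₀ f₁ : Polynomial Ω)
    (hf₀ : ∃ (n : ℕ) (c : ℕ → Ω), (∀ i, c i ∈ K) ∧
      f₀ = ∑ i ∈ Finset.range n, C (c i) * X ^ (r ^ 2) ^ i)
    (hf₁ : ∃ (n : ℕ) (c : ℕ → Ω), (∀ i, c i ∈ K) ∧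
      f₁ = ∑ i ∈ Finset.range n, C (c i) * X ^ (r ^ 2) ^ i)
    (z : Ω) (hz : a₀ * f₀.eval z + a₁ * (f₁.eval z) ^ r = 0) :
    a₀ ^ (1 + r) * (f₀.comp f₀).eval z - a₁ ^ (1 + r) * (f₁.comp f₁).eval (z ^ r ^ 2) = 0 := by
  classical
  obtain ⟨n₀, c₀, hc₀, hf₀e⟩ := hf₀
  obtain ⟨n₁, c₁, hc₁, hf₁e⟩ := hf₁
  -- characteristic setup
  set p : ℕ := ringChar K with hpdef
  haveI : CharP K p := ringChar.charP K
  obtain ⟨k, hpp, hKcard⟩ := FiniteField.card K p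
  haveI : Fact p.Prime := ⟨hpp⟩
  haveI hΩp : CharP Ω p :=
    charP_of_injective_ringHom (f := K.subtype) K.subtype.injective p
  have hrpk : r = p ^ (k : ℕ) := by rw [← hK, hKcard]
  -- Frobenius facts
  have fsum : ∀ (m : ℕ) (s : Finset ℕ) (g : ℕ → Ω),
      (∑ i ∈ s, g i) ^ p ^ m = ∑ i ∈ s, g i ^ p ^ m := by
    intro m s g
    simp only [← iterateFrobenius_def, map_sum]
  have fneg : ∀ (m : ℕ) (x : Ω), (-x) ^ p ^ m = -(x ^ p ^ m) := by
    intro m x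
    rw [← iterateFrobenius_def, ← iterateFrobenius_def, map_neg]
  have fsumr : ∀ (s : Finset ℕ) (g : ℕ → Ω), (∑ i ∈ s, g i) ^ r = ∑ i ∈ s, g i ^ r := by
    intro s g; rw [hrpk]; exact fsum k s g
  have fnegr : ∀ x : Ω, (-x) ^ r = -(x ^ r) := by
    intro x; rw [hrpk]; exact fneg k x
  have hq : ∀ i : ℕ, (r ^ 2) ^ i = p ^ (k * 2 * i) := by
    intro i; rw [hrpk, ← pow_mul, ← pow_mul]; congr 1; ring
  have fsumq : ∀ (i : ℕ) (s : Finset ℕ) (g : ℕ → Ω),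
      (∑ j ∈ s, g j) ^ (r ^ 2) ^ i = ∑ j ∈ s, g j ^ (r ^ 2) ^ i := by
    intro i s g; rw [hq i]; exact fsum _ s g
  -- fixed point facts
  have hiter : ∀ (x : Ω) (s : ℕ), x ^ s = x → ∀ i, x ^ s ^ i = x := by
    intro x s hx i
    induction i with
    | zero => simp
    | succ i ih => rw [pow_succ, pow_mul, ih, hx]
  have hKr : ∀ x : Ω, x ∈ K → x ^ r = x := by
    intro x hx
    have h := FiniteField.pow_card (⟨x, hx⟩ : K)
    rw [hK] at h
    have := congrArg (Subtype.val) h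
    push_cast at this
    exact this
  have hKfix : ∀ x : Ω, x ∈ K → ∀ i, x ^ (r ^ 2) ^ i = x := by
    intro x hx i
    rw [← pow_mul r 2 i]
    exact hiter x r (hKr x hx) (2 * i)
  have hLq : ∀ x : Ω, x ∈ L → x ^ r ^ 2 = x := by
    intro x hx
    have h := FiniteField.pow_card (⟨x, hx⟩ : L)
    rw [hL] at h
    have := congrArg (Subtype.val) h
    push_cast at this
    exact this
  -- evaluation of linearized polynomials
  have heval : ∀ (n : ℕ) (c : ℕ → Ω) (x : Ω),
      (∑ i ∈ Finset.range n, C (c i) * X ^ (r ^ 2) ^ i).eval x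
        = ∑ i ∈ Finset.range n, c i * x ^ (r ^ 2) ^ i := by
    intro n c x
    simp [eval_finset_sum]
  -- compatibility with r-th power
  have h1 : ∀ (n : ℕ) (c : ℕ → Ω), (∀ i, c i ∈ K) → ∀ x : Ω,
      ((∑ i ∈ Finset.range n, C (c i) * X ^ (r ^ 2) ^ i).eval x) ^ r
        = (∑ i ∈ Finset.range n, C (c i) * X ^ (r ^ 2) ^ i).eval (x ^ r) := by
    intro n c hc x
    rw [heval, heval, fsumr]
    refine Finset.sum_congr rfl fun i _ => ?_
    rw [mul_pow, hKr _ (hc i)]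
    congr 1
    exact pow_right_comm x ((r ^ 2) ^ i) r
  -- F_q-semilinearity (scalars fixed by q-th power)
  have h2 : ∀ (n : ℕ) (c : ℕ → Ω), (∀ i, c i ∈ K) → ∀ lam x : Ω, lam ^ r ^ 2 = lam →
      (∑ i ∈ Finset.range n, C (c i) * X ^ (r ^ 2) ^ i).eval (lam * x)
        = lam * (∑ i ∈ Finset.range n, C (c i) * X ^ (r ^ 2) ^ i).eval x := by
    intro n c hc lam x hlam
    rw [heval, heval, Finset.mul_sum]
    refine Finset.sum_congr rfl fun i _ => ?_
    rw [mul_pow, hiter lam (r ^ 2) hlam i]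
    ring
  -- double-sum formula for composition
  have key : ∀ (n m : ℕ) (c d : ℕ → Ω), (∀ i, c i ∈ K) → (∀ j, d j ∈ K) → ∀ x : Ω,
      (∑ i ∈ Finset.range n, C (c i) * X ^ (r ^ 2) ^ i).eval
        ((∑ j ∈ Finset.range m, C (d j) * X ^ (r ^ 2) ^ j).eval x)
      = ∑ i ∈ Finset.range n, ∑ j ∈ Finset.range m,
          c i * d j * x ^ ((r ^ 2) ^ i * (r ^ 2) ^ j) := by
    intro n m c d hc hd x
    rw [heval, heval]
    refine Finset.sum_congr rfl fun i _ => ?_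
    rw [fsumq i, Finset.mul_sum]
    refine Finset.sum_congr rfl fun j _ => ?_
    rw [mul_pow, hKfix _ (hd j) i, ← pow_mul, mul_comm ((r ^ 2) ^ j) ((r ^ 2) ^ i)]
    ring
  -- the two linearized polynomials commute
  have hcomm : f₀.eval (f₁.eval z) = f₁.eval (f₀.eval z) := by
    rw [hf₀e, hf₁e, key n₀ n₁ c₀ c₁ hc₀ hc₁ z, key n₁ n₀ c₁ c₀ hc₁ hc₀ z,
      Finset.sum_comm]
    refine Finset.sum_congr rfl fun j _ => Finset.sum_congr rfl fun i _ => ?_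
    rw [mul_comm ((r ^ 2) ^ i) ((r ^ 2) ^ j)]
    ring
  -- scalars fixed by q-th power
  have ha₀q : a₀ ^ r ^ 2 = a₀ := hLq a₀ ha₀
  have ha₁q : a₁ ^ r ^ 2 = a₁ := hLq a₁ ha₁
  have fnegq : ∀ x : Ω, (-x) ^ r ^ 2 = -(x ^ r ^ 2) := by
    intro x
    rw [pow_two r, pow_mul, pow_mul, fnegr, fnegr]
  have ha₀rq : (a₀ ^ r) ^ r ^ 2 = a₀ ^ r := by
    rw [← pow_mul, mul_comm, pow_mul, ha₀q]
  have ha₁rq : (a₁ ^ r) ^ r ^ 2 = a₁ ^ r := by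
    rw [← pow_mul, mul_comm, pow_mul, ha₁q]
  have hna₁q : (-a₁) ^ r ^ 2 = -a₁ := by rw [fnegq, ha₁q]
  have hna₁rq : (-(a₁ ^ r)) ^ r ^ 2 = -(a₁ ^ r) := by rw [fnegq, ha₁rq]
  -- restate semilinearity and r-th power compat for f₀, f₁
  have H1₀ : ∀ x : Ω, (f₀.eval x) ^ r = f₀.eval (x ^ r) := by
    intro x; rw [hf₀e]; exact h1 n₀ c₀ hc₀ x
  have H1₁ : ∀ x : Ω, (f₁.eval x) ^ r = f₁.eval (x ^ r) := by
    intro x; rw [hf₁e]; exact h1 n₁ c₁ hc₁ x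
  have H2₀ : ∀ lam x : Ω, lam ^ r ^ 2 = lam → f₀.eval (lam * x) = lam * f₀.eval x := by
    intro lam x hlam; rw [hf₀e]; exact h2 n₀ c₀ hc₀ lam x hlam
  have H2₁ : ∀ lam x : Ω, lam ^ r ^ 2 = lam → f₁.eval (lam * x) = lam * f₁.eval x := by
    intro lam x hlam; rw [hf₁e]; exact h2 n₁ c₁ hc₁ lam x hlam
  -- rearranged hypothesis
  have hz' : a₀ * f₀.eval z = -a₁ * (f₁.eval z) ^ r := by
    rw [neg_mul]; exact eq_neg_of_add_eq_zero_left hz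
  -- step (A): apply f₀
  have hA : a₀ * f₀.eval (f₀.eval z) = -a₁ * (f₀.eval (f₁.eval z)) ^ r := by
    have := congrArg (fun t => f₀.eval t) hz'
    rw [H2₀ a₀ _ ha₀q, H2₀ (-a₁) _ hna₁q] at this
    rw [this, H1₀]
  -- step (C): raise to the r-th power, then apply f₁
  have hzr : (a₀ ^ r) * (f₀.eval z) ^ r = -(a₁ ^ r) * f₁.eval (z ^ r ^ 2) := by
    have h' := congrArg (fun t => t ^ r) hz'
    simp only [mul_pow, fnegr] at h'
    rw [H1₁, H1₁, ← pow_mul, ← pow_two] at h'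
    exact h'
  have hC : (a₀ ^ r) * (f₁.eval (f₀.eval z)) ^ r
      = -(a₁ ^ r) * f₁.eval (f₁.eval (z ^ r ^ 2)) := by
    have := congrArg (fun t => f₁.eval t) hzr
    rw [H2₁ (a₀ ^ r) _ ha₀rq, H2₁ (-(a₁ ^ r)) _ hna₁rq] at this
    rw [← this, H1₁]
  -- conclude
  rw [eval_comp, eval_comp, pow_add, pow_add, pow_one]
  rw [hcomm] at hA
  linear_combination a₀ ^ r * hA - a₁ * hC
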